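/- Under the i.i.d. sampling assumption, the finite-sample conformal instance-segmentation procedure (Algorithm 3: greedy parameter ranking on the first n₁ calibration samples, followed by Conformal Risk Control on the remaining n₂ samples with duplicate removal by Unique*) satisfies, for every finite sample size, P( max_{ŷ ∈ C_{λ̂}(X^test)} IoU(Y^test, ŷ) > τ ) ≥ 1 − α. -/

import Mathlib

open MeasureTheory ProbabilityTheory
open scoped Classical

/-- A binary mask on a `W × H` grid: `true` encodes the value 1. -/
abbrev Mask (W H : ℕ) := Fin W × Fin H → Bool

/-- Intersection-over-Union of two binary masks, with the convention
`IoU A B = 1` when the union is empty. -/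
noncomputable def IoU {W H : ℕ} (A B : Mask W H) : ℝ :=
  if (Finset.univ.filter (fun p : Fin W × Fin H => A p = true ∨ B p = true)).card = 0 then 1
  else ((Finset.univ.filter (fun p : Fin W × Fin H => A p = true ∧ B p = true)).card : ℝ) /
    ((Finset.univ.filter (fun p : Fin W × Fin H => A p = true ∨ B p = true)).card : ℝ)

/-- The duplicate-removal procedure `Unique*` on finite lists of masks:
`Unique*([], η) = []` and `Unique*(C ++ [x], η)` keeps `x` iff no already-kept mask
has `IoU` with `x` exceeding `η`. -/
noncomputable def uniqueStar {W H : ℕ} (η : ℝ) (C : List (Mask W H)) : List (Mask W H) :=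
  C.foldl (fun acc x => if ∃ y ∈ acc, η < IoU x y then acc else acc ++ [x]) ([])

variable {𝒳 : Type*} {W H k : ℕ}

/-- `S_j`: indices `i ∈ {1,…,n₁}` of first-stage calibration points on which parameter
`j` yields a prediction with `IoU` exceeding `τ`. -/
noncomputable def covSet (f : 𝒳 → Fin k → Mask W H) (τ : ℝ)
    (samp : ℕ → 𝒳 × Mask W H) (n₁ : ℕ) (j : Fin k) : Finset ℕ :=
  (Finset.Icc 1 n₁).filter (fun i => τ < IoU (samp i).2 (f (samp i).1 j))

/-- The number of elements of `S j` not already covered by the previously ranked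
parameters `L 0, …, L (r-1)` (greedy gain at rank `r`). -/
noncomputable def gain (S : Fin k → Finset ℕ) (L : Fin k → Fin k) (r j : Fin k) : ℕ :=
  (S j \ (Finset.univ.filter (fun r' => r' < r)).biUnion (fun r' => S (L r'))).card

/-- The ordered list of predictions `[f(x, t_{L 1}), …, f(x, t_{L λ})]` at the first
`λ` ranked parameter values. -/
def predList (f : 𝒳 → Fin k → Mask W H) (L : Fin k → Fin k) (lam : ℕ) (x : 𝒳) :
    List (Mask W H) :=
  ((List.finRange k).take lam).map (fun r => f x (L r))

/-- The 0/1 loss: `1` iff no mask of the duplicate-removed prediction set `C_λ(x)`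
has `IoU` with the true mask exceeding `τ` (in particular `1` when the set is empty). -/
noncomputable def lossAt (f : 𝒳 → Fin k → Mask W H) (τ η : ℝ) (L : Fin k → Fin k)
    (lam : ℕ) (xy : 𝒳 × Mask W H) : ℝ :=
  if ∀ yhat ∈ uniqueStar η (predList f L lam xy.1), IoU xy.2 yhat ≤ τ then 1 else 0

/-- The empirical risk `r̂(λ)` over the second-stage calibration points
`n₁+1, …, n₁+n₂`. -/
noncomputable def empRisk (f : 𝒳 → Fin k → Mask W H) (τ η : ℝ) (L : Fin k → Fin k)
    (samp : ℕ → 𝒳 × Mask W H) (n₁ n₂ : ℕ) (lam : ℕ) : ℝ :=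
  (1 / (n₂ : ℝ)) * ∑ i ∈ Finset.Icc (n₁ + 1) (n₁ + n₂), lossAt f τ η L lam (samp i)

set_option maxHeartbeats 1000000

/-! ### Auxiliary definitions and lemmas for the proof -/

lemma IoU_self {W H : ℕ} (A : Mask W H) : IoU A A = 1 := by
  have hca : (Finset.univ.filter (fun p : Fin W × Fin H => A p = true ∧ A p = true))
      = (Finset.univ.filter (fun p : Fin W × Fin H => A p = true ∨ A p = true)) := by
    apply Finset.filter_congr; intro p _; tauto
  unfold IoU
  rw [hca]
  split_ifs with h
  · rfl
  · exact div_self (by exact_mod_cast h)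

lemma uniqueStar_append_exists {W H : ℕ} (η : ℝ) (C D : List (Mask W H)) :
    ∃ E, uniqueStar η (C ++ D) = uniqueStar η C ++ E := by
  have key : ∀ (D' acc : List (Mask W H)), ∃ E,
      D'.foldl (fun acc x => if ∃ y ∈ acc, η < IoU x y then acc else acc ++ [x]) acc
        = acc ++ E := by
    intro D'
    induction D' with
    | nil => exact fun acc => ⟨[], by simp⟩
    | cons x D' ih =>
      intro acc
      simp only [List.foldl_cons]
      by_cases hc : ∃ y ∈ acc, η < IoU x y
      · obtain ⟨E, hE⟩ := ih acc
        exact ⟨E, by rw [if_pos hc]; exact hE⟩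
      · obtain ⟨E, hE⟩ := ih (acc ++ [x])
        exact ⟨[x] ++ E, by rw [if_neg hc, hE, List.append_assoc]⟩
  obtain ⟨E, hE⟩ := key D (uniqueStar η C)
  exact ⟨E, by rw [uniqueStar, List.foldl_append]; exact hE⟩

/-- `t`-level loss: loss of a single (prediction-vector, truth) pair. -/
noncomputable def tLoss (τ η : ℝ) (L : Fin k → Fin k) (lam : ℕ)
    (d : (Fin k → Mask W H) × Mask W H) : ℝ :=
  if ∀ yhat ∈ uniqueStar η (((List.finRange k).take lam).map fun r => d.1 (L r)),
      IoU d.2 yhat ≤ τ then 1 else 0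

lemma lossAt_eq_tLoss (f : 𝒳 → Fin k → Mask W H) (τ η : ℝ) (L : Fin k → Fin k)
    (lam : ℕ) (xy : 𝒳 × Mask W H) :
    lossAt f τ η L lam xy = tLoss τ η L lam (fun j => f xy.1 j, xy.2) := rfl

lemma tLoss_eq_or (τ η : ℝ) (L : Fin k → Fin k) (lam : ℕ) (d) :
    tLoss (W := W) (H := H) τ η L lam d = 0 ∨ tLoss τ η L lam d = 1 := by
  unfold tLoss; split <;> simp

lemma tLoss_nonneg (τ η : ℝ) (L : Fin k → Fin k) (lam : ℕ) (d) :
    0 ≤ tLoss (W := W) (H := H) τ η L lam d := by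
  rcases tLoss_eq_or τ η L lam d with h | h <;> rw [h] <;> norm_num

lemma tLoss_le_one (τ η : ℝ) (L : Fin k → Fin k) (lam : ℕ) (d) :
    tLoss (W := W) (H := H) τ η L lam d ≤ 1 := by
  rcases tLoss_eq_or τ η L lam d with h | h <;> rw [h] <;> norm_num

lemma tLoss_mono (τ η : ℝ) (L : Fin k → Fin k) {lam lam' : ℕ} (h : lam ≤ lam') (d)
    (h1 : tLoss (W := W) (H := H) τ η L lam' d = 1) : tLoss τ η L lam d = 1 := by
  have hsplit : ((List.finRange k).take lam').map (fun r => d.1 (L r))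
      = ((List.finRange k).take lam).map (fun r => d.1 (L r))
        ++ (((List.finRange k).take lam').drop lam).map (fun r => d.1 (L r)) := by
    rw [← List.map_append]
    congr 1
    conv_lhs => rw [← List.take_append_drop lam ((List.finRange k).take lam')]
    rw [List.take_take, min_eq_left h]
  obtain ⟨E, hE⟩ := uniqueStar_append_exists η
    (((List.finRange k).take lam).map (fun r => d.1 (L r)))
    ((((List.finRange k).take lam').drop lam).map (fun r => d.1 (L r)))
  unfold tLoss at h1 ⊢
  rw [if_pos]
  split_ifs at h1 with hcond
  · intro y hy
    exact hcond y (by rw [hsplit, hE]; exact List.mem_append_left _ hy)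
  · norm_num at h1

/-- The greedy-optimality property defining the ranking `L`. -/
def gProp (S : Fin k → Finset ℕ) (L : Fin k → Fin k) : Prop :=
  ∀ r j, gain S L r j ≤ gain S L r (L r) ∧
    (gain S L r j = gain S L r (L r) → L r ≤ j)

lemma gain_congr {S : Fin k → Finset ℕ} {L L' : Fin k → Fin k} {r : Fin k}
    (h : ∀ r' : Fin k, r' < r → L r' = L' r') (j : Fin k) :
    gain S L r j = gain S L' r j := by
  unfold gain
  congr 2
  refine Finset.biUnion_congr rfl fun r' hr' => ?_
  rw [h r' (Finset.mem_filter.mp hr').2]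

lemma gProp_unique {S : Fin k → Finset ℕ} {L L' : Fin k → Fin k}
    (h : gProp S L) (h' : gProp S L') : L = L' := by
  have key : ∀ n : ℕ, ∀ r : Fin k, r.val = n → L r = L' r := by
    intro n
    induction n using Nat.strong_induction_on with
    | _ n ih =>
      intro r hr
      have hlt : ∀ r' : Fin k, r' < r → L r' = L' r' := fun r' hr' =>
        ih r'.val (hr ▸ hr') r' rfl
      have hg : ∀ j, gain S L r j = gain S L' r j := gain_congr hlt
      have e1 : gain S L r (L' r) ≤ gain S L r (L r) := (h r (L' r)).1
      have e2 : gain S L' r (L r) ≤ gain S L' r (L' r) := (h' r (L r)).1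
      rw [← hg, ← hg] at e2
      have heq : gain S L r (L' r) = gain S L r (L r) := le_antisymm e1 e2
      have h12 : L r ≤ L' r := (h r (L' r)).2 heq
      have h21 : L' r ≤ L r := (h' r (L r)).2 (by rw [← hg, ← hg, heq])
      exact le_antisymm h12 h21
  funext r
  exact key r.val r rfl

/-- Embedding of natural indices `0,…,n₁+n₂` into `Fin (n₁+n₂+1)`. -/
def idx (n₁ n₂ i : ℕ) : Fin (n₁ + n₂ + 1) := ⟨min i (n₁ + n₂), by omega⟩

lemma idx_mk (n₁ n₂ i : ℕ) (h : i ≤ n₁ + n₂) : idx n₁ n₂ i = ⟨i, by omega⟩ := by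
  simp [idx, Fin.ext_iff, min_eq_left h]

/-- `t`-level first-stage coverage sets. -/
noncomputable def tCov (τ : ℝ) (n₁ n₂ : ℕ)
    (t : Fin (n₁ + n₂ + 1) → (Fin k → Mask W H) × Mask W H) (j : Fin k) : Finset ℕ :=
  (Finset.Icc 1 n₁).filter
    (fun i => τ < IoU (t (idx n₁ n₂ i)).2 ((t (idx n₁ n₂ i)).1 j))

/-- `t`-level total (test + second-stage) loss. -/
noncomputable def totLoss (τ η : ℝ) (n₁ n₂ : ℕ)
    (t : Fin (n₁ + n₂ + 1) → (Fin k → Mask W H) × Mask W H) (L : Fin k → Fin k)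
    (lam : ℕ) : ℝ :=
  ∑ i ∈ insert 0 (Finset.Icc (n₁ + 1) (n₁ + n₂)), tLoss τ η L lam (t (idx n₁ n₂ i))

/-- `t`-level "augmented" CRC threshold λ̃. -/
noncomputable def lamT (τ η α : ℝ) (n₁ n₂ : ℕ)
    (t : Fin (n₁ + n₂ + 1) → (Fin k → Mask W H) × Mask W H) (L : Fin k → Fin k) : ℕ :=
  sInf {lam | lam ∈ Finset.Icc 1 k ∧ totLoss τ η n₁ n₂ t L lam ≤ (n₂ + 1) * α}

lemma lamT_spec (τ η α : ℝ) (n₁ n₂ : ℕ)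
    (t : Fin (n₁ + n₂ + 1) → (Fin k → Mask W H) × Mask W H) (L : Fin k → Fin k)
    (h : lamT τ η α n₁ n₂ t L ∈ Finset.Icc 1 k) :
    totLoss τ η n₁ n₂ t L (lamT τ η α n₁ n₂ t L) ≤ (n₂ + 1) * α := by
  by_cases hne : {lam | lam ∈ Finset.Icc 1 k ∧ totLoss τ η n₁ n₂ t L lam ≤
      (n₂ + 1) * α}.Nonempty
  · exact (Nat.sInf_mem hne).2
  · exfalso
    rw [Set.not_nonempty_iff_eq_empty] at hne
    rw [lamT, hne, Nat.sInf_empty, Finset.mem_Icc] at h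
    omega

/-- The "bad" event at coordinate `i`. -/
def tBad (τ η α : ℝ) (n₁ n₂ : ℕ) (i : Fin (n₁ + n₂ + 1)) :
    Set (Fin (n₁ + n₂ + 1) → (Fin k → Mask W H) × Mask W H) :=
  {t | ∃ L, gProp (tCov τ n₁ n₂ t) L ∧ lamT τ η α n₁ n₂ t L ∈ Finset.Icc 1 k ∧
    tLoss τ η L (lamT τ η α n₁ n₂ t L) (t i) = 1}

section Swap

variable (τ η α : ℝ) (n₁ n₂ : ℕ)
  (t : Fin (n₁ + n₂ + 1) → (Fin k → Mask W H) × Mask W H)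

lemma tCov_swap {i : ℕ} (hi : i ∈ Finset.Icc (n₁ + 1) (n₁ + n₂)) :
    tCov (k := k) τ n₁ n₂ (t ∘ (Equiv.swap (idx n₁ n₂ 0) (idx n₁ n₂ i))) = tCov τ n₁ n₂ t := by
  rw [Finset.mem_Icc] at hi
  funext j
  unfold tCov
  refine Finset.filter_congr fun a ha => ?_
  rw [Finset.mem_Icc] at ha
  have h1 : idx n₁ n₂ a ≠ idx n₁ n₂ 0 := by
    rw [idx_mk n₁ n₂ a (by omega), idx_mk n₁ n₂ 0 (by omega)]
    simp only [ne_eq, Fin.mk.injEq]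
    omega
  have h2 : idx n₁ n₂ a ≠ idx n₁ n₂ i := by
    rw [idx_mk n₁ n₂ a (by omega), idx_mk n₁ n₂ i (by omega)]
    simp only [ne_eq, Fin.mk.injEq]
    omega
  have : (t ∘ (Equiv.swap (idx n₁ n₂ 0) (idx n₁ n₂ i))) (idx n₁ n₂ a) = t (idx n₁ n₂ a) := by
    simp only [Function.comp_apply, Equiv.swap_apply_of_ne_of_ne h1 h2]
  rw [this]

lemma totLoss_swap {i : ℕ} (hi : i ∈ Finset.Icc (n₁ + 1) (n₁ + n₂)) (L : Fin k → Fin k) (lam : ℕ) :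
    totLoss τ η n₁ n₂ (t ∘ (Equiv.swap (idx n₁ n₂ 0) (idx n₁ n₂ i))) L lam
      = totLoss τ η n₁ n₂ t L lam := by
  rw [Finset.mem_Icc] at hi
  unfold totLoss
  refine Finset.sum_nbij' (i := fun a => if a = 0 then i else if a = i then 0 else a)
    (j := fun a => if a = 0 then i else if a = i then 0 else a)
    ?_ ?_ ?_ ?_ ?_
  · intro a ha
    simp only [Finset.mem_insert, Finset.mem_Icc] at ha ⊢
    split_ifs <;> omega
  · intro a ha
    simp only [Finset.mem_insert, Finset.mem_Icc] at ha ⊢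
    split_ifs <;> omega
  · intro a ha
    simp only [Finset.mem_insert, Finset.mem_Icc] at ha
    split_ifs <;> omega
  · intro a ha
    simp only [Finset.mem_insert, Finset.mem_Icc] at ha
    split_ifs <;> omega
  · intro a ha
    simp only [Finset.mem_insert, Finset.mem_Icc] at ha
    have harg : (t ∘ (Equiv.swap (idx n₁ n₂ 0) (idx n₁ n₂ i))) (idx n₁ n₂ a)
        = t (idx n₁ n₂ (if a = 0 then i else if a = i then 0 else a)) := by
      simp only [Function.comp_apply]
      rcases ha with rfl | ⟨ha1, ha2⟩
      · rw [if_pos rfl, Equiv.swap_apply_left]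
      · have ha0 : a ≠ 0 := by omega
        by_cases hai : a = i
        · subst hai
          rw [if_neg ha0, if_pos rfl, Equiv.swap_apply_right]
        · rw [if_neg ha0, if_neg hai]
          have h1 : idx n₁ n₂ a ≠ idx n₁ n₂ 0 := by
            rw [idx_mk n₁ n₂ a (by omega), idx_mk n₁ n₂ 0 (by omega)]
            simp only [ne_eq, Fin.mk.injEq]; omega
          have h2 : idx n₁ n₂ a ≠ idx n₁ n₂ i := by
            rw [idx_mk n₁ n₂ a (by omega), idx_mk n₁ n₂ i (by omega)]
            simp only [ne_eq, Fin.mk.injEq]; omega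
          rw [Equiv.swap_apply_of_ne_of_ne h1 h2]
    rw [harg]

lemma lamT_swap {i : ℕ} (hi : i ∈ Finset.Icc (n₁ + 1) (n₁ + n₂)) (L : Fin k → Fin k) :
    lamT τ η α n₁ n₂ (t ∘ (Equiv.swap (idx n₁ n₂ 0) (idx n₁ n₂ i))) L
      = lamT τ η α n₁ n₂ t L := by
  have hset : {lam | lam ∈ Finset.Icc 1 k ∧
        totLoss τ η n₁ n₂ (t ∘ (Equiv.swap (idx n₁ n₂ 0) (idx n₁ n₂ i))) L lam
          ≤ (n₂ + 1) * α}
      = {lam | lam ∈ Finset.Icc 1 k ∧ totLoss τ η n₁ n₂ t L lam ≤ (n₂ + 1) * α} := by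
    ext lam
    rw [Set.mem_setOf_eq, Set.mem_setOf_eq, totLoss_swap τ η n₁ n₂ t hi L lam]
  rw [lamT, lamT, hset]

lemma tBad_swap {i : ℕ} (hi : i ∈ Finset.Icc (n₁ + 1) (n₁ + n₂)) :
    tBad (W := W) (H := H) (k := k) τ η α n₁ n₂ (idx n₁ n₂ i)
      = (fun t => t ∘ (Equiv.swap (idx n₁ n₂ 0) (idx n₁ n₂ i))) ⁻¹'
          tBad τ η α n₁ n₂ (idx n₁ n₂ 0) := by
  ext t
  have h0 : (t ∘ (Equiv.swap (idx n₁ n₂ 0) (idx n₁ n₂ i))) (idx n₁ n₂ 0)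
      = t (idx n₁ n₂ i) := by
    simp only [Function.comp_apply, Equiv.swap_apply_left]
  simp only [tBad, Set.mem_preimage, Set.mem_setOf_eq, tCov_swap τ n₁ n₂ t hi,
    lamT_swap τ η α n₁ n₂ t hi, h0]

end Swap

/-- finite-sample validity of the conformal instance-segmentation
procedure (Algorithm 3): greedy parameter ranking `L` on the first `n₁` i.i.d.
calibration samples, Conformal Risk Control choice of `λ̂` on the remaining `n₂`
samples with duplicate removal by `Unique*`, and prediction set
`C_{λ̂}(X^test) = Unique*([f(X^test, t_{L 1}), …, f(X^test, t_{L λ̂})], η)` if `λ̂ ≤ k`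
(the set of all masks if `λ̂ = k+1`). The test point is `Z 0`, which is i.i.d. with the
calibration points `Z 1, …, Z (n₁+n₂)`. Then
`P(max_{ŷ ∈ C_{λ̂}(X^test)} IoU(Y^test, ŷ) > τ) ≥ 1 − α`. -/
theorem finite_sample_conformal_validity
    [MeasurableSpace 𝒳] (hk : 1 ≤ k)
    {Ω : Type*} [MeasurableSpace Ω] (Pr : Measure Ω) [IsProbabilityMeasure Pr]
    (P : Measure (𝒳 × Mask W H)) [IsProbabilityMeasure P]
    (f : 𝒳 → Fin k → Mask W H) (hf : ∀ j, Measurable (fun x => f x j))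
    (α τ η : ℝ) (hα : α ∈ Set.Ioo (0:ℝ) 1) (hτ : τ ∈ Set.Ioo (0:ℝ) 1)
    (hη : η ∈ Set.Ioo (0:ℝ) 1)
    (n₁ n₂ : ℕ) (hn₁ : 0 < n₁) (hn₂ : 0 < n₂) (hn₂α : (1 - α) / α ≤ (n₂ : ℝ))
    (Z : ℕ → Ω → 𝒳 × Mask W H) (hZmeas : ∀ i, Measurable (Z i))
    (hindep : iIndepFun Z Pr)
    (hlaw : ∀ i, Measure.map (Z i) Pr = P)
    -- greedy ranking of the parameters based on the first n₁ calibration samples: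
    -- L[r] is the smallest index maximizing the number of newly covered points
    (L : Ω → Fin k → Fin k)
    (hL : ∀ (ω : Ω) (r j : Fin k),
      gain (covSet f τ (fun i => Z i ω) n₁) (L ω) r j
          ≤ gain (covSet f τ (fun i => Z i ω) n₁) (L ω) r (L ω r) ∧
        (gain (covSet f τ (fun i => Z i ω) n₁) (L ω) r j
            = gain (covSet f τ (fun i => Z i ω) n₁) (L ω) r (L ω r) → L ω r ≤ j))
    -- λ̂: the smallest λ ∈ {1,…,k} whose empirical risk on the n₂ second-stage
    -- samples is ≤ α − (1−α)/n₂, and k+1 if no such λ exists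
    (lamhat : Ω → ℕ)
    (hlamhat : ∀ ω : Ω,
      (lamhat ω ∈ Finset.Icc 1 k ∧
        empRisk f τ η (L ω) (fun i => Z i ω) n₁ n₂ (lamhat ω) ≤ α - (1 - α) / n₂ ∧
        ∀ lam ∈ Finset.Icc 1 k,
          empRisk f τ η (L ω) (fun i => Z i ω) n₁ n₂ lam ≤ α - (1 - α) / n₂ →
            lamhat ω ≤ lam) ∨
      (lamhat ω = k + 1 ∧
        ∀ lam ∈ Finset.Icc 1 k,
          ¬ (empRisk f τ η (L ω) (fun i => Z i ω) n₁ n₂ lam ≤ α - (1 - α) / n₂))) :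
    ENNReal.ofReal (1 - α) ≤
      Pr {ω | ∃ yhat ∈ (if lamhat ω = k + 1 then (Set.univ : Set (Mask W H))
          else {y | y ∈ uniqueStar η (predList f (L ω) (lamhat ω) (Z 0 ω).1)}),
        τ < IoU (Z 0 ω).2 yhat} := by
  classical
  obtain ⟨hα0, hα1⟩ := hα
  set g : 𝒳 × Mask W H → (Fin k → Mask W H) × Mask W H :=
    fun xy => (fun j => f xy.1 j, xy.2) with hgdef
  have hg : Measurable g := Measurable.prodMk
    (measurable_pi_lambda _ fun j => (hf j).comp measurable_fst) measurable_snd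
  set V : Ω → (Fin (n₁ + n₂ + 1) → 𝒳 × Mask W H) := fun ω i => Z i.val ω with hVdef
  have hV : Measurable V := measurable_pi_lambda _ fun i => hZmeas i.val
  set Tf : (Fin (n₁ + n₂ + 1) → 𝒳 × Mask W H) →
      (Fin (n₁ + n₂ + 1) → (Fin k → Mask W H) × Mask W H) := fun v i => g (v i) with hTfdef
  have hTf : Measurable Tf := measurable_pi_lambda _ fun i => hg.comp (measurable_pi_apply i)
  have hallmeas : ∀ s : Set (Fin (n₁ + n₂ + 1) → (Fin k → Mask W H) × Mask W H),
      MeasurableSet s := fun s => s.toFinite.measurableSet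
  -- Step 1 : law of the joint vector is the product measure
  have hpi : Measure.map V Pr = Measure.pi (fun _ : Fin (n₁ + n₂ + 1) => P) := by
    refine (Measure.pi_eq fun s hs => ?_).symm
    rw [Measure.map_apply hV (MeasurableSet.univ_pi hs)]
    have key : V ⁻¹' (Set.univ.pi s)
        = ⋂ i ∈ Finset.range (n₁ + n₂ + 1),
            (fun j => if h : j < n₁ + n₂ + 1 then Z j ⁻¹' s ⟨j, h⟩ else Set.univ) i := by
      ext ω
      simp only [Set.mem_preimage, Set.mem_pi, Set.mem_univ, forall_true_left, Set.mem_iInter,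
        Finset.mem_range]
      constructor
      · intro h j hj
        simp only [hj, dif_pos]
        exact h ⟨j, hj⟩
      · intro h i
        have := h i.val i.isLt
        simpa [i.isLt] using this
    rw [key, hindep.meas_biInter (S := Finset.range (n₁ + n₂ + 1))
      (s := fun j => if h : j < n₁ + n₂ + 1 then Z j ⁻¹' s ⟨j, h⟩ else Set.univ) ?_]
    · rw [Finset.prod_range fun j => Pr (if h : j < n₁ + n₂ + 1 then Z j ⁻¹' s ⟨j, h⟩
        else Set.univ)]
      refine Finset.prod_congr rfl fun i _ => ?_
      simp only [i.isLt, dif_pos]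
      rw [← hlaw i.val, Measure.map_apply (hZmeas _) (hs _)]
    · intro i hi
      simp only [Finset.mem_range] at hi
      simp only [hi, dif_pos]
      exact ⟨s ⟨i, hi⟩, hs _, rfl⟩
  set ν : Measure (Fin (n₁ + n₂ + 1) → (Fin k → Mask W H) × Mask W H) :=
    Measure.map Tf (Measure.pi (fun _ : Fin (n₁ + n₂ + 1) => P)) with hνdef
  have hν_prob : IsProbabilityMeasure ν := Measure.isProbabilityMeasure_map hTf.aemeasurable
  -- Step 2 : exchangeability
  have hswap : ∀ i ∈ Finset.Icc (n₁ + 1) (n₁ + n₂),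
      ν (tBad τ η α n₁ n₂ (idx n₁ n₂ i)) = ν (tBad τ η α n₁ n₂ (idx n₁ n₂ 0)) := by
    intro i hi
    have hE : Measurable (fun (u : Fin (n₁ + n₂ + 1) → (Fin k → Mask W H) × Mask W H) =>
        u ∘ (Equiv.swap (idx n₁ n₂ 0) (idx n₁ n₂ i))) :=
      measurable_pi_lambda _ fun j => measurable_pi_apply _
    have hE' : Measurable (fun (v : Fin (n₁ + n₂ + 1) → 𝒳 × Mask W H) =>
        v ∘ (Equiv.swap (idx n₁ n₂ 0) (idx n₁ n₂ i))) :=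
      measurable_pi_lambda _ fun j => measurable_pi_apply _
    rw [tBad_swap τ η α n₁ n₂ hi, ← Measure.map_apply hE (hallmeas _)]
    congr 1
    rw [hνdef, Measure.map_map hE hTf]
    have hcomm : ((fun (u : Fin (n₁ + n₂ + 1) → (Fin k → Mask W H) × Mask W H) =>
        u ∘ (Equiv.swap (idx n₁ n₂ 0) (idx n₁ n₂ i))) ∘ Tf)
        = Tf ∘ (fun v => v ∘ (Equiv.swap (idx n₁ n₂ 0) (idx n₁ n₂ i))) := rfl
    rw [hcomm, ← Measure.map_map hTf hE']
    congr 1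
    -- permutation invariance of the product measure
    have hperm := measurePreserving_arrowCongr' (fun _ : Fin (n₁ + n₂ + 1) => P)
      (fun _ : Fin (n₁ + n₂ + 1) => P) (Equiv.swap (idx n₁ n₂ 0) (idx n₁ n₂ i)).symm
      (MeasurableEquiv.refl (𝒳 × Mask W H)) (fun _ => MeasurePreserving.id P)
    have heq : (fun (v : Fin (n₁ + n₂ + 1) → 𝒳 × Mask W H) =>
        v ∘ (Equiv.swap (idx n₁ n₂ 0) (idx n₁ n₂ i)))
        = (MeasurableEquiv.arrowCongr' (Equiv.swap (idx n₁ n₂ 0) (idx n₁ n₂ i)).symm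
            (MeasurableEquiv.refl (𝒳 × Mask W H))) := by
      refine funext fun v => funext fun j => ?_
      simp [MeasurableEquiv.arrowCongr', Equiv.arrowCongr']
    rw [heq]
    exact hperm.map_eq
  -- Step 3 : the counting bound
  have hptwise : ∀ u : Fin (n₁ + n₂ + 1) → (Fin k → Mask W H) × Mask W H, (∑ jj ∈ insert 0 (Finset.Icc (n₁ + 1) (n₁ + n₂)),
      (tBad τ η α n₁ n₂ (idx n₁ n₂ jj)).indicator (fun _ => (1 : ENNReal)) u)
        ≤ ENNReal.ofReal ((n₂ + 1) * α) := by
    intro u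
    by_cases hex : ∃ L0, gProp (tCov τ n₁ n₂ u) L0 ∧
        lamT τ η α n₁ n₂ u L0 ∈ Finset.Icc 1 k
    · obtain ⟨L0, hPL, hmem⟩ := hex
      have hval : ∀ jj, (tBad τ η α n₁ n₂ (idx n₁ n₂ jj)).indicator (fun _ => (1 : ENNReal)) u
          = ENNReal.ofReal (tLoss τ η L0 (lamT τ η α n₁ n₂ u L0) (u (idx n₁ n₂ jj))) := by
        intro jj
        by_cases hB : u ∈ tBad τ η α n₁ n₂ (idx n₁ n₂ jj)
        · obtain ⟨L', hPL', -, hloss'⟩ := id hB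
          have hLL : L' = L0 := gProp_unique hPL' hPL
          rw [hLL] at hloss'
          rw [Set.indicator_of_mem hB, hloss', ENNReal.ofReal_one]
        · rw [Set.indicator_of_notMem hB]
          rcases tLoss_eq_or τ η L0 (lamT τ η α n₁ n₂ u L0) (u (idx n₁ n₂ jj)) with h0 | h1
          · rw [h0, ENNReal.ofReal_zero]
          · exact absurd ⟨L0, hPL, hmem, h1⟩ hB
      rw [Finset.sum_congr rfl fun jj _ => hval jj,
        ← ENNReal.ofReal_sum_of_nonneg (fun jj _ => tLoss_nonneg _ _ _ _ _)]
      exact ENNReal.ofReal_le_ofReal (lamT_spec τ η α n₁ n₂ u L0 hmem)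
    · have hzero : ∀ jj ∈ insert 0 (Finset.Icc (n₁ + 1) (n₁ + n₂)),
          (tBad τ η α n₁ n₂ (idx n₁ n₂ jj)).indicator (fun _ => (1 : ENNReal)) u = 0 := by
        intro jj _
        refine Set.indicator_of_notMem (fun hB => hex ?_) _
        obtain ⟨L', h1, h2, -⟩ := hB
        exact ⟨L', h1, h2⟩
      rw [Finset.sum_congr rfl hzero]
      simp
  have hcard : (insert 0 (Finset.Icc (n₁ + 1) (n₁ + n₂))).card = n₂ + 1 := by
    rw [Finset.card_insert_of_notMem (by simp), Nat.card_Icc]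
    omega
  have hcount : ν (tBad τ η α n₁ n₂ (idx n₁ n₂ 0)) ≤ ENNReal.ofReal α := by
    have hsum_eq : ∑ jj ∈ insert 0 (Finset.Icc (n₁ + 1) (n₁ + n₂)),
        ν (tBad τ η α n₁ n₂ (idx n₁ n₂ jj))
        = (insert 0 (Finset.Icc (n₁ + 1) (n₁ + n₂))).card •
            ν (tBad τ η α n₁ n₂ (idx n₁ n₂ 0)) := by
      rw [← Finset.sum_const]
      refine Finset.sum_congr rfl fun jj hjj => ?_
      rcases Finset.mem_insert.mp hjj with rfl | hmm
      · rfl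
      · exact hswap jj hmm
    have hsum_le : (∑ jj ∈ insert 0 (Finset.Icc (n₁ + 1) (n₁ + n₂)),
        ν (tBad τ η α n₁ n₂ (idx n₁ n₂ jj))) ≤ ENNReal.ofReal ((n₂ + 1) * α) := by
      calc ∑ jj ∈ insert 0 (Finset.Icc (n₁ + 1) (n₁ + n₂)),
            ν (tBad τ η α n₁ n₂ (idx n₁ n₂ jj))
          = ∑ jj ∈ insert 0 (Finset.Icc (n₁ + 1) (n₁ + n₂)),
            ∫⁻ u, (tBad τ η α n₁ n₂ (idx n₁ n₂ jj)).indicator (fun _ => (1 : ENNReal)) u ∂ν :=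
            Finset.sum_congr rfl fun jj _ => (lintegral_indicator_one (hallmeas _)).symm
        _ = ∫⁻ u, ∑ jj ∈ insert 0 (Finset.Icc (n₁ + 1) (n₁ + n₂)),
            (tBad τ η α n₁ n₂ (idx n₁ n₂ jj)).indicator (fun _ => (1 : ENNReal)) u ∂ν :=
            (lintegral_finset_sum _ fun jj _ => measurable_const.indicator (hallmeas _)).symm
        _ ≤ ∫⁻ _, ENNReal.ofReal ((n₂ + 1) * α) ∂ν := lintegral_mono hptwise
        _ = ENNReal.ofReal ((n₂ + 1) * α) := by rw [lintegral_const, measure_univ, mul_one]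
    rw [hsum_eq, hcard] at hsum_le
    have hofr : ENNReal.ofReal ((n₂ + 1) * α) = ((n₂ + 1 : ℕ) : ENNReal) * ENNReal.ofReal α := by
      rw [ENNReal.ofReal_mul (by positivity), ← ENNReal.ofReal_natCast (n₂ + 1)]
      norm_num
    rw [hofr, nsmul_eq_mul] at hsum_le
    have hne0 : ((n₂ + 1 : ℕ) : ENNReal) ≠ 0 := by simp
    have hnetop : ((n₂ + 1 : ℕ) : ENNReal) ≠ ⊤ := by simp
    exact (ENNReal.mul_le_mul_iff_right hne0 hnetop).mp hsum_le
  -- Step 4 : event inclusion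
  have hsub : {ω | ∃ yhat ∈ (if lamhat ω = k + 1 then (Set.univ : Set (Mask W H))
        else {y | y ∈ uniqueStar η (predList f (L ω) (lamhat ω) (Z 0 ω).1)}),
      τ < IoU (Z 0 ω).2 yhat}ᶜ ⊆ (fun ω => Tf (V ω)) ⁻¹' tBad τ η α n₁ n₂ (idx n₁ n₂ 0) := by
    intro ω hω
    simp only [Set.mem_compl_iff, Set.mem_setOf_eq] at hω
    have hlam_ne : lamhat ω ≠ k + 1 := by
      intro hk1
      exact hω ⟨(Z 0 ω).2, by rw [if_pos hk1]; exact Set.mem_univ _,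
        by rw [IoU_self]; exact hτ.2⟩
    obtain ⟨hmem, hrisk, -⟩ | ⟨heq, -⟩ := hlamhat ω
    swap
    · exact absurd heq hlam_ne
    have hcov : covSet f τ (fun i => Z i ω) n₁ = tCov τ n₁ n₂ (Tf (V ω)) := by
      funext j
      unfold covSet tCov
      refine Finset.filter_congr fun a ha => ?_
      rw [Finset.mem_Icc] at ha
      have hidx : Tf (V ω) (idx n₁ n₂ a) = (fun j => f (Z a ω).1 j, (Z a ω).2) := by
        rw [idx_mk n₁ n₂ a (by omega)]
      rw [hidx]
    have hprop : gProp (tCov τ n₁ n₂ (Tf (V ω))) (L ω) := by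
      rw [← hcov]; exact hL ω
    have hbridge : ∀ lam, ∑ i ∈ Finset.Icc (n₁ + 1) (n₁ + n₂),
        tLoss τ η (L ω) lam (Tf (V ω) (idx n₁ n₂ i))
          = ∑ i ∈ Finset.Icc (n₁ + 1) (n₁ + n₂), lossAt f τ η (L ω) lam (Z i ω) := by
      intro lam
      refine Finset.sum_congr rfl fun a ha => ?_
      rw [Finset.mem_Icc] at ha
      rw [idx_mk n₁ n₂ a (by omega)]
      rfl
    have h0notin : (0 : ℕ) ∉ Finset.Icc (n₁ + 1) (n₁ + n₂) := by simp
    have hn : (0 : ℝ) < n₂ := by exact_mod_cast hn₂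
    have hcal : ∑ i ∈ Finset.Icc (n₁ + 1) (n₁ + n₂), lossAt f τ η (L ω) (lamhat ω) (Z i ω)
        ≤ n₂ * α - (1 - α) := by
      rw [empRisk] at hrisk
      have hS : ∑ i ∈ Finset.Icc (n₁ + 1) (n₁ + n₂), lossAt f τ η (L ω) (lamhat ω) (Z i ω)
          = (n₂ : ℝ) * ((1 / (n₂ : ℝ)) *
            ∑ i ∈ Finset.Icc (n₁ + 1) (n₁ + n₂), lossAt f τ η (L ω) (lamhat ω) (Z i ω)) := by
        field_simp
      rw [hS]
      calc (n₂ : ℝ) * ((1 / (n₂ : ℝ)) *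
            ∑ i ∈ Finset.Icc (n₁ + 1) (n₁ + n₂), lossAt f τ η (L ω) (lamhat ω) (Z i ω))
          ≤ (n₂ : ℝ) * (α - (1 - α) / n₂) := mul_le_mul_of_nonneg_left hrisk hn.le
        _ = n₂ * α - (1 - α) := by field_simp
    have htot : totLoss τ η n₁ n₂ (Tf (V ω)) (L ω) (lamhat ω) ≤ (n₂ + 1) * α := by
      rw [totLoss, Finset.sum_insert h0notin, hbridge]
      have hle1 := tLoss_le_one τ η (L ω) (lamhat ω) (Tf (V ω) (idx n₁ n₂ 0))
      nlinarith [hcal, hle1]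
    have hm' : lamhat ω ∈ {lam : ℕ | lam ∈ Finset.Icc 1 k ∧
        totLoss τ η n₁ n₂ (Tf (V ω)) (L ω) lam ≤ (n₂ + 1) * α} := by
      rw [Set.mem_setOf_eq]
      exact ⟨hmem, htot⟩
    have hlamT_le : lamT τ η α n₁ n₂ (Tf (V ω)) (L ω) ≤ lamhat ω := Nat.sInf_le hm'
    have hlamT_mem : lamT τ η α n₁ n₂ (Tf (V ω)) (L ω) ∈ Finset.Icc 1 k :=
      (Nat.sInf_mem (⟨lamhat ω, hm'⟩ : Set.Nonempty _)).1
    have hidx0 : Tf (V ω) (idx n₁ n₂ 0) = (fun j => f (Z 0 ω).1 j, (Z 0 ω).2) := by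
      rw [idx_mk n₁ n₂ 0 (by omega)]
    have hloss1 : tLoss τ η (L ω) (lamhat ω) (Tf (V ω) (idx n₁ n₂ 0)) = 1 := by
      rw [hidx0, ← lossAt_eq_tLoss]
      have hall : ∀ y ∈ uniqueStar η (predList f (L ω) (lamhat ω) (Z 0 ω).1),
          IoU (Z 0 ω).2 y ≤ τ := by
        intro y hy
        by_contra hgt
        push_neg at hgt
        exact hω ⟨y, by rw [if_neg hlam_ne]; exact hy, hgt⟩
      rw [lossAt, if_pos hall]
    exact ⟨L ω, hprop, hlamT_mem, tLoss_mono τ η (L ω) hlamT_le _ hloss1⟩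
  -- Step 5 : conclusion
  have hPrBad : Pr ((fun ω => Tf (V ω)) ⁻¹' tBad τ η α n₁ n₂ (idx n₁ n₂ 0))
      ≤ ENNReal.ofReal α := by
    have hmap : Pr ((fun ω => Tf (V ω)) ⁻¹' tBad τ η α n₁ n₂ (idx n₁ n₂ 0))
        = ν (tBad τ η α n₁ n₂ (idx n₁ n₂ 0)) := by
      rw [show (fun ω => Tf (V ω)) = Tf ∘ V from rfl,
        ← Measure.map_apply (hTf.comp hV) (hallmeas _),
        ← Measure.map_map hTf hV, hpi]
    rw [hmap]
    exact hcount
  set G := {ω | ∃ yhat ∈ (if lamhat ω = k + 1 then (Set.univ : Set (Mask W H))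
      else {y | y ∈ uniqueStar η (predList f (L ω) (lamhat ω) (Z 0 ω).1)}),
    τ < IoU (Z 0 ω).2 yhat} with hG
  have hGc : Pr Gᶜ ≤ ENNReal.ofReal α := le_trans (measure_mono hsub) hPrBad
  have hunion : (1 : ENNReal) ≤ Pr G + Pr Gᶜ := by
    calc (1 : ENNReal) = Pr (G ∪ Gᶜ) := by rw [Set.union_compl_self, measure_univ]
      _ ≤ Pr G + Pr Gᶜ := measure_union_le _ _
  have hfin : (1 : ENNReal) ≤ Pr G + ENNReal.ofReal α :=
    hunion.trans (add_le_add le_rfl hGc)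
  have hsubeq : ENNReal.ofReal (1 - α) = 1 - ENNReal.ofReal α := by
    rw [← ENNReal.ofReal_one, ← ENNReal.ofReal_sub _ hα0.le]
  rw [hsubeq]
  exact tsub_le_iff_right.mpr hfin
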